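/- Let φ_k be the endomorphism of F(a,b) given by a ↦ a^{ε₀} b^k, b ↦ b^{ε₁}, and let W be a freely reduced word. Then: (1) if W begins with a, the reduced form of Wφ_k begins with a^{ε₀}; (2) if W begins with a^{-1}, the reduced form of Wφ_k begins with b^{-k} a^{-ε₀}; (3) if W ends with a^{-1}, it ends with a^{-ε₀}; (4) if W ends with a, it ends with a^{ε₀} b^{k}. -/

import Mathlib

set_option linter.unusedSectionVars false
set_option maxHeartbeats 1000000

def innAut (G : Type*) [Group G] : Subgroup (MulAut G) := (MulAut.conj : G →* MulAut G).range

instance innAut_normal (G : Type*) [Group G] : (innAut G).Normal := by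
  constructor
  rintro x ⟨g, rfl⟩ f
  refine ⟨f g, ?_⟩
  ext h
  simp [MulAut.conj_apply, MulAut.mul_apply, mul_assoc]

abbrev Out (G : Type*) [Group G] := MulAut G ⧸ innAut G

def ResiduallyFinite (G : Type*) [Group G] : Prop :=
  ∀ g : G, g ≠ 1 → ∃ N : Subgroup G, N.Normal ∧ Finite (G ⧸ N) ∧ g ∉ N

noncomputable def expSum (i : Fin 2) : FreeGroup (Fin 2) →* Multiplicative ℤ :=
  FreeGroup.lift (fun j => Multiplicative.ofAdd (if j = i then (1 : ℤ) else 0))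

noncomputable def σ (i : Fin 2) (w : FreeGroup (Fin 2)) : ℤ :=
  Multiplicative.toAdd (expSum i w)

def NielsenEquiv {G : Type*} [Group G] {n : ℕ} (Y Z : Fin n → G) : Prop :=
  ∃ φ : FreeGroup (Fin n) ≃* FreeGroup (Fin n),
    ∀ i, FreeGroup.lift Y (φ (FreeGroup.of i)) = Z i

def SameTSystem {G : Type*} [Group G] {n : ℕ} (Y Z : Fin n → G) : Prop :=
  ∃ ψ : G ≃* G, NielsenEquiv (fun i => ψ (Y i)) Z

/-- φ_k : a ↦ a^{ε₀}bᵏ, b ↦ b^{ε₁}. -/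
noncomputable def φk (ε₀ ε₁ k : ℤ) : FreeGroup (Fin 2) →* FreeGroup (Fin 2) :=
  FreeGroup.lift (fun t => if t = 0
    then (FreeGroup.of (0 : Fin 2)) ^ ε₀ * (FreeGroup.of (1 : Fin 2)) ^ k
    else (FreeGroup.of (1 : Fin 2)) ^ ε₁)

namespace Aux

variable {α : Type*} [DecidableEq α]

/-- Non-cancelling adjacency. -/
def NC (u v : α × Bool) : Prop := u.1 = v.1 → u.2 = v.2

/-- A word is (locally) reduced. -/
def Rd (L : List (α × Bool)) : Prop := List.Chain' NC L

theorem reduce_eq_self {L : List (α × Bool)} (h : Rd L) : FreeGroup.reduce L = L := by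
  induction L with
  | nil => rfl
  | cons x L ih =>
    have hL : Rd L := h.tail
    rw [FreeGroup.reduce.cons, ih hL]
    cases L with
    | nil => rfl
    | cons y t =>
      have hxy : NC x y := (List.isChain_cons_cons.mp h).1
      simp only
      rw [if_neg]
      rintro ⟨h1, h2⟩
      rw [hxy h1] at h2
      simp at h2

theorem rd_reduce (L : List (α × Bool)) : Rd (FreeGroup.reduce L) := by
  induction L with
  | nil => exact List.isChain_nil
  | cons x L ih =>
    rw [FreeGroup.reduce.cons]
    cases hL : FreeGroup.reduce L with
    | nil => exact List.isChain_singleton _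
    | cons y t =>
      rw [hL] at ih
      simp only
      by_cases hc : x.1 = y.1 ∧ x.2 = !y.2
      · rw [if_pos hc]; exact ih.tail
      · rw [if_neg hc]
        refine List.isChain_cons_cons.mpr ⟨?_, ih⟩
        intro h1
        by_contra h2
        exact hc ⟨h1, by cases hx : x.2 <;> cases hy : y.2 <;> simp_all⟩

theorem rd_toWord (x : FreeGroup α) : Rd x.toWord := by
  have := rd_reduce x.toWord
  rwa [FreeGroup.reduce_toWord] at this

theorem toWord_mk_of_rd {L : List (α × Bool)} (h : Rd L) : (FreeGroup.mk L).toWord = L := by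
  rw [FreeGroup.toWord_mk, reduce_eq_self h]

theorem toWord_mul {x y : FreeGroup α} (h : Rd (x.toWord ++ y.toWord)) :
    (x * y).toWord = x.toWord ++ y.toWord := by
  conv_lhs => rw [← FreeGroup.mk_toWord (x := x), ← FreeGroup.mk_toWord (x := y)]
  rw [FreeGroup.mul_mk, toWord_mk_of_rd h]

theorem toWord_zpow (i : α) (c : ℤ) :
    ((FreeGroup.of i) ^ c).toWord = List.replicate c.natAbs (i, decide (0 < c)) := by
  rcases c with n | n
  · rw [Int.ofNat_eq_coe, zpow_natCast, FreeGroup.toWord_of_pow]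
    cases n with
    | zero => simp
    | succ m => simp; omega
  · rw [zpow_negSucc, FreeGroup.toWord_inv, FreeGroup.toWord_of_pow, FreeGroup.invRev]
    simp [List.map_replicate, List.reverse_replicate]

theorem invRev_cons (x : α × Bool) (L : List (α × Bool)) :
    FreeGroup.invRev (x :: L) = FreeGroup.invRev L ++ [(x.1, !x.2)] := by
  simp [FreeGroup.invRev]

theorem invRev_concat (x : α × Bool) (L : List (α × Bool)) :
    FreeGroup.invRev (L ++ [x]) = (x.1, !x.2) :: FreeGroup.invRev L := by
  simp [FreeGroup.invRev]

/-! ### Fin 2 specific -/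

/-- the word of `b^c`. -/
def bw (c : ℤ) : List (Fin 2 × Bool) := ((FreeGroup.of (1 : Fin 2)) ^ c).toWord

theorem bw_eq (c : ℤ) : bw c = List.replicate c.natAbs ((1 : Fin 2), decide (0 < c)) :=
  toWord_zpow _ _

theorem mem_bw {c : ℤ} {x : Fin 2 × Bool} (h : x ∈ bw c) : x.1 = 1 := by
  rw [bw_eq] at h
  rw [List.eq_of_mem_replicate h]

theorem rd_bw (c : ℤ) : Rd (bw c) := rd_toWord _

theorem mk_bw (c : ℤ) : FreeGroup.mk (bw c) = FreeGroup.of (1 : Fin 2) ^ c :=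
  FreeGroup.mk_toWord

theorem head_bw_append {c : ℤ} {l : List (Fin 2 × Bool)} {y : Fin 2 × Bool}
    (h : y ∈ ((bw c) ++ l).head?) : y.1 = 1 ∨ (c = 0 ∧ y ∈ l.head?) := by
  rw [bw_eq] at h
  cases hn : c.natAbs with
  | zero =>
    rw [hn] at h
    right
    exact ⟨Int.natAbs_eq_zero.mp hn, by simpa using h⟩
  | succ m =>
    rw [hn, List.replicate_succ] at h
    left
    simp only [List.cons_append, List.head?_cons, Option.mem_def, Option.some.injEq] at h
    rw [← h]

theorem rd_bw_append {c : ℤ} {l : List (Fin 2 × Bool)} (hl : Rd l)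
    (hhd : ∀ y ∈ l.head?, y.1 = 0) : Rd (bw c ++ l) := by
  refine List.IsChain.append (rd_bw c) hl ?_
  intro x hx y hy
  intro hxy
  have h1 : x.1 = 1 := mem_bw (List.mem_of_mem_getLast? hx)
  have h2 : y.1 = 0 := hhd y hy
  rw [h1, h2] at hxy
  exact absurd hxy (by decide)

variable (ε₀ ε₁ k : ℤ)

theorem φ_a : φk ε₀ ε₁ k (FreeGroup.of 0) =
    FreeGroup.of (0 : Fin 2) ^ ε₀ * FreeGroup.of (1 : Fin 2) ^ k := by
  simp [φk]

theorem φ_b : φk ε₀ ε₁ k (FreeGroup.of 1) = FreeGroup.of (1 : Fin 2) ^ ε₁ := by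
  rw [φk, FreeGroup.lift_apply_of, if_neg (by decide)]

theorem φ_bzpow (m : ℤ) : φk ε₀ ε₁ k (FreeGroup.of 1 ^ m) =
    FreeGroup.of (1 : Fin 2) ^ (ε₁ * m) := by
  rw [map_zpow, φ_b, ← zpow_mul]

theorem φ_ainv : φk ε₀ ε₁ k ((FreeGroup.of 0)⁻¹) =
    FreeGroup.of (1 : Fin 2) ^ (-k) * FreeGroup.of (0 : Fin 2) ^ (-ε₀) := by
  rw [map_inv, φ_a, mul_inv_rev, zpow_neg, zpow_neg]

theorem mk_single_true (i : Fin 2) : FreeGroup.mk [(i, true)] = FreeGroup.of i := rfl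

theorem mk_single_false (i : Fin 2) : FreeGroup.mk [(i, false)] = (FreeGroup.of i)⁻¹ := by
  show _ = (FreeGroup.mk [(i, true)])⁻¹
  rw [FreeGroup.inv_mk]
  rfl

theorem ofpow_pos (h0 : ε₀ = 1 ∨ ε₀ = -1) (i : Fin 2) :
    (FreeGroup.of i ^ ε₀).toWord = [(i, decide (0 < ε₀))] := by
  rcases h0 with h | h <;> subst h <;> rw [toWord_zpow] <;> norm_num

theorem ofpow_neg (h0 : ε₀ = 1 ∨ ε₀ = -1) (i : Fin 2) :
    (FreeGroup.of i ^ (-ε₀)).toWord = [(i, !decide (0 < ε₀))] := by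
  rcases h0 with h | h <;> subst h <;> rw [toWord_zpow] <;> norm_num

/-- peel off the leading block of b-letters. -/
theorem peel (n : ℕ) : ∀ (V : FreeGroup (Fin 2)), V.toWord.length ≤ n → ∀ s : Bool,
    V.toWord.head? = some (1, s) →
    ∃ (m : ℤ) (V' : FreeGroup (Fin 2)), (if s then 0 < m else m < 0) ∧
      V = FreeGroup.of 1 ^ m * V' ∧ (∀ y ∈ V'.toWord.head?, y.1 = 0) ∧
      V'.toWord.length < V.toWord.length := by
  induction n with
  | zero =>
    intro V hlen s hs
    rw [List.length_eq_zero_iff.mp (Nat.le_zero.mp hlen)] at hs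
    simp at hs
  | succ n ih =>
    intro V hlen s hs
    cases hV : V.toWord with
    | nil => rw [hV] at hs; simp at hs
    | cons x L =>
      rw [hV] at hs
      simp only [List.head?_cons, Option.some.injEq] at hs
      subst hs
      have hr : Rd (((1 : Fin 2), s) :: L) := hV ▸ rd_toWord V
      have hL : Rd L := hr.tail
      have hw2 : (FreeGroup.mk L).toWord = L := toWord_mk_of_rd hL
      have hdec : V = FreeGroup.mk [((1 : Fin 2), s)] * FreeGroup.mk L := by
        rw [FreeGroup.mul_mk, List.singleton_append, ← hV, FreeGroup.mk_toWord]
      have hmk : FreeGroup.mk [((1 : Fin 2), s)] =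
          FreeGroup.of (1 : Fin 2) ^ (if s then (1 : ℤ) else -1) := by
        cases s
        · rw [mk_single_false]; simp
        · rw [mk_single_true]; simp
      have hlenL : L.length ≤ n := by rw [hV] at hlen; simpa using hlen
      cases hLh : L.head? with
      | none =>
        refine ⟨if s then 1 else -1, FreeGroup.mk L, by cases s <;> simp, by rw [hdec, hmk], ?_, ?_⟩
        · intro y hy; rw [hw2, hLh] at hy; simp at hy
        · rw [hw2]; simp
      | some y =>
        obtain ⟨i, b⟩ := y
        have hNC : NC ((1 : Fin 2), s) (i, b) := (List.isChain_cons.mp hr).1 _ hLh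
        by_cases hi : i = (0 : Fin 2)
        · subst hi
          refine ⟨if s then 1 else -1, FreeGroup.mk L, by cases s <;> simp, by rw [hdec, hmk], ?_, ?_⟩
          · intro y hy; rw [hw2, hLh] at hy; simp only [Option.mem_def, Option.some.injEq] at hy
            rw [← hy]
          · rw [hw2]; simp
        · have hi1 : i = 1 := by omega
          subst hi1
          have hb : b = s := (hNC rfl).symm
          subst hb
          obtain ⟨m, V', hsign, hfac, hhd, hlt⟩ :=
            ih (FreeGroup.mk L) (by rw [hw2]; exact hlenL) b (by rw [hw2, hLh])
          refine ⟨(if b then (1 : ℤ) else -1) + m, V', ?_, ?_, hhd, ?_⟩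
          · cases b <;> simp_all <;> omega
          · rw [hdec, hmk, hfac, ← mul_assoc, ← zpow_add]
          · rw [hw2] at hlt; simp; omega

/-- the inductive invariant. -/
def Sp (V : FreeGroup (Fin 2)) : Prop :=
  (∀ L, V.toWord = ((0 : Fin 2), true) :: L →
      ∃ rest, (φk ε₀ ε₁ k V).toWord = ((0 : Fin 2), decide (0 < ε₀)) :: rest) ∧
  (∀ L, V.toWord = ((0 : Fin 2), false) :: L →
      ∃ rest, (φk ε₀ ε₁ k V).toWord = bw (-k) ++ ((0 : Fin 2), !decide (0 < ε₀)) :: rest)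

theorem Hlem (h0 : ε₀ = 1 ∨ ε₀ = -1) {V : FreeGroup (Fin 2)} (hS : Sp ε₀ ε₁ k V)
    (hd : ∀ y ∈ V.toWord.head?, y.1 = (0 : Fin 2)) (c : ℤ) :
    (V = 1 ∧ (FreeGroup.of 1 ^ c * φk ε₀ ε₁ k V).toWord = bw c) ∨
    ((∃ L, V.toWord = ((0 : Fin 2), true) :: L) ∧
      ∃ rest, (FreeGroup.of 1 ^ c * φk ε₀ ε₁ k V).toWord =
        bw c ++ ((0 : Fin 2), decide (0 < ε₀)) :: rest) ∨
    ((∃ L, V.toWord = ((0 : Fin 2), false) :: L) ∧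
      ∃ rest, (FreeGroup.of 1 ^ c * φk ε₀ ε₁ k V).toWord =
        bw (c - k) ++ ((0 : Fin 2), !decide (0 < ε₀)) :: rest) := by
  cases hV : V.toWord with
  | nil =>
    have hV1 : V = 1 := FreeGroup.toWord_eq_nil_iff.mp hV
    left
    refine ⟨hV1, ?_⟩
    rw [hV1, map_one, mul_one]; rfl
  | cons y L =>
    have hy : y.1 = 0 := hd y (by rw [hV]; rfl)
    obtain ⟨i, bl⟩ := y
    simp only at hy
    subst hy
    cases bl with
    | true =>
      obtain ⟨rest, hrest⟩ := hS.1 L hV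
      refine Or.inr (Or.inl ⟨⟨L, rfl⟩, rest, ?_⟩)
      have hrd : Rd ((FreeGroup.of (1 : Fin 2) ^ c).toWord ++ (φk ε₀ ε₁ k V).toWord) := by
        rw [hrest]
        exact rd_bw_append (hrest ▸ rd_toWord _)
          (by rintro y hy; simp only [List.head?_cons, Option.mem_def, Option.some.injEq] at hy
              rw [← hy])
      rw [toWord_mul hrd, hrest]; rfl
    | false =>
      obtain ⟨rest, hrest⟩ := hS.2 L hV
      refine Or.inr (Or.inr ⟨⟨L, rfl⟩, rest, ?_⟩)
      have hrdphi : Rd ((φk ε₀ ε₁ k V).toWord) := rd_toWord _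
      rw [hrest] at hrdphi
      have hr2 : Rd (((0 : Fin 2), !decide (0 < ε₀)) :: rest) :=
        (List.isChain_append.mp hrdphi).2.1
      have hY : (FreeGroup.mk (((0 : Fin 2), !decide (0 < ε₀)) :: rest)).toWord =
          ((0 : Fin 2), !decide (0 < ε₀)) :: rest := toWord_mk_of_rd hr2
      have hfac : φk ε₀ ε₁ k V = FreeGroup.of 1 ^ (-k) *
          FreeGroup.mk (((0 : Fin 2), !decide (0 < ε₀)) :: rest) := by
        conv_lhs => rw [← FreeGroup.mk_toWord (x := φk ε₀ ε₁ k V)]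
        rw [hrest, ← FreeGroup.mul_mk, mk_bw]
      have hrd : Rd ((FreeGroup.of (1 : Fin 2) ^ (c - k)).toWord ++
          (FreeGroup.mk (((0 : Fin 2), !decide (0 < ε₀)) :: rest)).toWord) := by
        rw [hY]
        exact rd_bw_append hr2
          (by rintro y hy; simp only [List.head?_cons, Option.mem_def, Option.some.injEq] at hy
              rw [← hy])
      rw [hfac, ← mul_assoc, ← zpow_add, ← sub_eq_add_neg, toWord_mul hrd, hY]; rfl

theorem main (h0 : ε₀ = 1 ∨ ε₀ = -1) (h1 : ε₁ = 1 ∨ ε₁ = -1) :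
    ∀ n (V : FreeGroup (Fin 2)), V.toWord.length ≤ n → Sp ε₀ ε₁ k V := by
  have hε₁ : ε₁ ≠ 0 := by rcases h1 with h | h <;> simp [h]
  intro n
  induction n with
  | zero =>
    intro V hl
    constructor <;> intro L hV <;> rw [hV] at hl <;> simp at hl
  | succ n ih =>
    intro V hlen
    have AUX : ∀ (bl : Bool) L, V.toWord = ((0 : Fin 2), bl) :: L →
        ∃ (c : ℤ) (V₃ : FreeGroup (Fin 2)),
          φk ε₀ ε₁ k (FreeGroup.mk L) = FreeGroup.of 1 ^ c * φk ε₀ ε₁ k V₃ ∧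
          (∀ y ∈ V₃.toWord.head?, y.1 = 0) ∧ V₃.toWord.length ≤ n ∧
          (∀ L', V₃.toWord = ((0 : Fin 2), !bl) :: L' → c ≠ 0) := by
      intro bl L hV
      have hr : Rd (((0 : Fin 2), bl) :: L) := hV ▸ rd_toWord V
      have hL : Rd L := hr.tail
      have hw2 : (FreeGroup.mk L).toWord = L := toWord_mk_of_rd hL
      have hlenL : L.length ≤ n := by rw [hV] at hlen; simpa using hlen
      cases hLh : L.head? with
      | none =>
        refine ⟨0, FreeGroup.mk L, by rw [zpow_zero, one_mul], ?_, by rw [hw2]; exact hlenL, ?_⟩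
        · intro y hy; rw [hw2, hLh] at hy; simp at hy
        · intro L' hL'; rw [hw2] at hL'; rw [hL'] at hLh; simp at hLh
      | some y =>
        obtain ⟨i, s⟩ := y
        have hNC : NC ((0 : Fin 2), bl) (i, s) := (List.isChain_cons.mp hr).1 _ hLh
        by_cases hi : i = (0 : Fin 2)
        · subst hi
          have hs : s = bl := (hNC rfl).symm
          subst hs
          refine ⟨0, FreeGroup.mk L, by rw [zpow_zero, one_mul], ?_, by rw [hw2]; exact hlenL, ?_⟩
          · intro y hy; rw [hw2, hLh] at hy
            simp only [Option.mem_def, Option.some.injEq] at hy; rw [← hy]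
          · intro L' hL'
            rw [hw2] at hL'
            rw [hL'] at hLh
            simp at hLh
        · have hi1 : i = 1 := by omega
          subst hi1
          obtain ⟨m, V₃, hsign, hfac, hhd3, hlt3⟩ :=
            peel n (FreeGroup.mk L) (by rw [hw2]; exact hlenL) s (by rw [hw2, hLh])
          have hm : m ≠ 0 := by cases s <;> simp at hsign <;> omega
          refine ⟨ε₁ * m, V₃, ?_, hhd3, ?_, ?_⟩
          · rw [hfac, map_mul, φ_bzpow]
          · rw [hw2] at hlt3; omega
          · intro L' _
            exact mul_ne_zero hε₁ hm
    constructor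
    · intro L hV
      obtain ⟨c, V₃, hEq, hd₃, hlen₃, hcc⟩ := AUX true L hV
      have htri := Hlem ε₀ ε₁ k h0 (ih V₃ hlen₃) hd₃ (k + c)
      set M := (FreeGroup.of 1 ^ (k + c) * φk ε₀ ε₁ k V₃).toWord with hM
      have hMhead : ∀ y ∈ M.head?, NC ((0 : Fin 2), decide (0 < ε₀)) y := by
        intro y hy hfst
        rcases htri with ⟨_, hMw⟩ | ⟨_, rest, hMw⟩ | ⟨⟨L', hVw⟩, rest, hMw⟩
        · rw [hMw] at hy
          have := mem_bw (List.mem_of_mem_head? hy)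
          have h01 : (0 : Fin 2) = 1 := hfst.trans this
          exact absurd h01 (by decide)
        · rw [hMw] at hy
          rcases head_bw_append hy with h1 | ⟨_, h2⟩
          · exact absurd (show (0 : Fin 2) = 1 from hfst.trans h1) (by decide)
          · simp only [List.head?_cons, Option.mem_def, Option.some.injEq] at h2
            rw [← h2]
        · rw [hMw] at hy
          rcases head_bw_append hy with h1 | ⟨h2, _⟩
          · exact absurd (show (0 : Fin 2) = 1 from hfst.trans h1) (by decide)
          · have : c ≠ 0 := hcc L' (by simpa using hVw)
            omega
      have hdec : V = FreeGroup.of 0 * FreeGroup.mk L := by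
        rw [← mk_single_true, FreeGroup.mul_mk, List.singleton_append, ← hV, FreeGroup.mk_toWord]
      have hφV : φk ε₀ ε₁ k V =
          FreeGroup.of 0 ^ ε₀ * (FreeGroup.of 1 ^ (k + c) * φk ε₀ ε₁ k V₃) := by
        rw [hdec, map_mul, φ_a, mul_assoc, hEq,
          ← mul_assoc (FreeGroup.of (1 : Fin 2) ^ k), ← zpow_add]
      refine ⟨M, ?_⟩
      have hrd : Rd ((FreeGroup.of (0 : Fin 2) ^ ε₀).toWord ++ M) := by
        rw [ofpow_pos ε₀ h0, List.singleton_append]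
        exact List.isChain_cons.mpr ⟨hMhead, hM ▸ rd_toWord _⟩
      rw [hφV, toWord_mul hrd, ofpow_pos ε₀ h0, ← hM,
        List.singleton_append]
    · intro L hV
      obtain ⟨c, V₃, hEq, hd₃, hlen₃, hcc⟩ := AUX false L hV
      have htri := Hlem ε₀ ε₁ k h0 (ih V₃ hlen₃) hd₃ c
      set M := (FreeGroup.of 1 ^ c * φk ε₀ ε₁ k V₃).toWord with hM
      have hMhead : ∀ y ∈ M.head?, NC ((0 : Fin 2), !decide (0 < ε₀)) y := by
        intro y hy hfst
        rcases htri with ⟨_, hMw⟩ | ⟨⟨L', hVw⟩, rest, hMw⟩ | ⟨_, rest, hMw⟩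
        · rw [hMw] at hy
          have := mem_bw (List.mem_of_mem_head? hy)
          have h01 : (0 : Fin 2) = 1 := hfst.trans this
          exact absurd h01 (by decide)
        · rw [hMw] at hy
          rcases head_bw_append hy with h1 | ⟨h2, _⟩
          · exact absurd (show (0 : Fin 2) = 1 from hfst.trans h1) (by decide)
          · exact absurd h2 (hcc L' (by simpa using hVw))
        · rw [hMw] at hy
          rcases head_bw_append hy with h1 | ⟨_, h2⟩
          · exact absurd (show (0 : Fin 2) = 1 from hfst.trans h1) (by decide)
          · simp only [List.head?_cons, Option.mem_def, Option.some.injEq] at h2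
            rw [← h2]
      have hdec : V = (FreeGroup.of 0)⁻¹ * FreeGroup.mk L := by
        rw [← mk_single_false, FreeGroup.mul_mk, List.singleton_append, ← hV, FreeGroup.mk_toWord]
      have hφV : φk ε₀ ε₁ k V = FreeGroup.of 1 ^ (-k) *
          (FreeGroup.of 0 ^ (-ε₀) * (FreeGroup.of 1 ^ c * φk ε₀ ε₁ k V₃)) := by
        rw [hdec, map_mul, φ_ainv, hEq, mul_assoc]
      have hu : (FreeGroup.of (0 : Fin 2) ^ (-ε₀) *
          (FreeGroup.of 1 ^ c * φk ε₀ ε₁ k V₃)).toWord =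
          ((0 : Fin 2), !decide (0 < ε₀)) :: M := by
        have hrd : Rd ((FreeGroup.of (0 : Fin 2) ^ (-ε₀)).toWord ++ M) := by
          rw [ofpow_neg ε₀ h0, List.singleton_append]
          exact List.isChain_cons.mpr ⟨hMhead, hM ▸ rd_toWord _⟩
        rw [toWord_mul hrd, ofpow_neg ε₀ h0, ← hM,
          List.singleton_append]
      refine ⟨M, ?_⟩
      have hrd2 : Rd ((FreeGroup.of (1 : Fin 2) ^ (-k)).toWord ++
          (FreeGroup.of (0 : Fin 2) ^ (-ε₀) * (FreeGroup.of 1 ^ c * φk ε₀ ε₁ k V₃)).toWord) := by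
        rw [hu]
        refine rd_bw_append ?_ ?_
        · rw [← hu]; exact rd_toWord _
        · rintro y hy
          simp only [List.head?_cons, Option.mem_def, Option.some.injEq] at hy
          rw [← hy]
      rw [hφV, toWord_mul hrd2, hu]; rfl

end Aux

namespace Aux

theorem invRev_append {α : Type*} (A B : List (α × Bool)) :
    FreeGroup.invRev (A ++ B) = FreeGroup.invRev B ++ FreeGroup.invRev A := by
  simp [FreeGroup.invRev]

theorem invRev_bw (k : ℤ) : FreeGroup.invRev (bw (-k)) = bw k := by
  show FreeGroup.invRev ((FreeGroup.of (1 : Fin 2) ^ (-k)).toWord) =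
    (FreeGroup.of (1 : Fin 2) ^ k).toWord
  rw [← FreeGroup.toWord_inv, ← zpow_neg, neg_neg]

end Aux

theorem statement_13 (ε₀ ε₁ : ℤ) (h0 : ε₀ = 1 ∨ ε₀ = -1) (h1 : ε₁ = 1 ∨ ε₁ = -1)
    (k : ℤ) (W : FreeGroup (Fin 2)) :
    (([((0 : Fin 2), true)] <+: W.toWord) →
      ((FreeGroup.of (0 : Fin 2) ^ ε₀).toWord <+: (φk ε₀ ε₁ k W).toWord)) ∧
    (([((0 : Fin 2), false)] <+: W.toWord) →
      ((FreeGroup.of (1 : Fin 2) ^ (-k) * FreeGroup.of (0 : Fin 2) ^ (-ε₀)).toWord <+: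
        (φk ε₀ ε₁ k W).toWord)) ∧
    (([((0 : Fin 2), false)] <:+ W.toWord) →
      ((FreeGroup.of (0 : Fin 2) ^ (-ε₀)).toWord <:+ (φk ε₀ ε₁ k W).toWord)) ∧
    (([((0 : Fin 2), true)] <:+ W.toWord) →
      ((FreeGroup.of (0 : Fin 2) ^ ε₀ * FreeGroup.of (1 : Fin 2) ^ k).toWord <:+
        (φk ε₀ ε₁ k W).toWord)) := by
  have p : ∀ (U : FreeGroup (Fin 2)), Aux.Sp ε₀ ε₁ k U :=
    fun U => Aux.main ε₀ ε₁ k h0 h1 U.toWord.length U le_rfl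
  refine ⟨?_, ?_, ?_, ?_⟩
  · rintro ⟨t, ht⟩
    obtain ⟨rest, hr⟩ := (p W).1 t (by rw [← ht]; rfl)
    rw [Aux.ofpow_pos ε₀ h0, hr]
    exact ⟨rest, rfl⟩
  · rintro ⟨t, ht⟩
    obtain ⟨rest, hr⟩ := (p W).2 t (by rw [← ht]; rfl)
    have hlhs : (FreeGroup.of (1 : Fin 2) ^ (-k) * FreeGroup.of (0 : Fin 2) ^ (-ε₀)).toWord =
        Aux.bw (-k) ++ [((0 : Fin 2), !decide (0 < ε₀))] := by
      have hrd : Aux.Rd ((FreeGroup.of (1 : Fin 2) ^ (-k)).toWord ++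
          (FreeGroup.of (0 : Fin 2) ^ (-ε₀)).toWord) := by
        rw [Aux.ofpow_neg ε₀ h0]
        exact Aux.rd_bw_append (List.isChain_singleton _)
          (by rintro y hy
              simp only [List.head?_cons, Option.mem_def, Option.some.injEq] at hy
              rw [← hy])
      rw [Aux.toWord_mul hrd, Aux.ofpow_neg ε₀ h0]
      rfl
    rw [hlhs, hr]
    exact ⟨rest, by simp⟩
  · rintro ⟨t, ht⟩
    have hW' : (W⁻¹).toWord = ((0 : Fin 2), true) :: FreeGroup.invRev t := by
      rw [FreeGroup.toWord_inv, ← ht, Aux.invRev_concat]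
      simp
    obtain ⟨rest, hr⟩ := (p W⁻¹).1 (FreeGroup.invRev t) hW'
    have hr' : FreeGroup.invRev (φk ε₀ ε₁ k W).toWord =
        ((0 : Fin 2), decide (0 < ε₀)) :: rest := by
      rw [← FreeGroup.toWord_inv, ← map_inv]; exact hr
    have hw : (φk ε₀ ε₁ k W).toWord =
        FreeGroup.invRev (((0 : Fin 2), decide (0 < ε₀)) :: rest) := by
      rw [← hr', FreeGroup.invRev_invRev]
    rw [hw, Aux.invRev_cons, Aux.ofpow_neg ε₀ h0]
    exact ⟨FreeGroup.invRev rest, rfl⟩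
  · rintro ⟨t, ht⟩
    have hW' : (W⁻¹).toWord = ((0 : Fin 2), false) :: FreeGroup.invRev t := by
      rw [FreeGroup.toWord_inv, ← ht, Aux.invRev_concat]
      simp
    obtain ⟨rest, hr⟩ := (p W⁻¹).2 (FreeGroup.invRev t) hW'
    have hr' : FreeGroup.invRev (φk ε₀ ε₁ k W).toWord =
        Aux.bw (-k) ++ ((0 : Fin 2), !decide (0 < ε₀)) :: rest := by
      rw [← FreeGroup.toWord_inv, ← map_inv]; exact hr
    have hw : (φk ε₀ ε₁ k W).toWord =
        (FreeGroup.invRev rest ++ [((0 : Fin 2), decide (0 < ε₀))]) ++ Aux.bw k := by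
      have hthis := congrArg FreeGroup.invRev hr'
      rw [FreeGroup.invRev_invRev] at hthis
      rw [hthis, Aux.invRev_append, Aux.invRev_bw, Aux.invRev_cons]
      simp
    have hlhs : (FreeGroup.of (0 : Fin 2) ^ ε₀ * FreeGroup.of (1 : Fin 2) ^ k).toWord =
        ((0 : Fin 2), decide (0 < ε₀)) :: Aux.bw k := by
      have hrd : Aux.Rd ((FreeGroup.of (0 : Fin 2) ^ ε₀).toWord ++
          (FreeGroup.of (1 : Fin 2) ^ k).toWord) := by
        rw [Aux.ofpow_pos ε₀ h0, List.singleton_append]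
        refine List.isChain_cons.mpr ⟨?_, Aux.rd_bw k⟩
        intro y hy hf
        have hy1 : y.1 = 1 := Aux.mem_bw (List.mem_of_mem_head? hy)
        exact absurd (show (0 : Fin 2) = 1 from hf.trans hy1) (by decide)
      rw [Aux.toWord_mul hrd, Aux.ofpow_pos ε₀ h0, List.singleton_append]
      rfl
    rw [hlhs, hw]
    exact ⟨FreeGroup.invRev rest, by simp⟩
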